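/- Let R ⊆ T be an inclusion of integral domains and let ν be an ideal valuation on R. Then the function ν^e : Ideal(T) → ℕ∞ defined by ν^e(I) = sup{ν(J) : J a finitely generated ideal of R with JT ⊆ I}, where JT denotes the ideal of T generated by J, is an ideal valuation on T. -/

import Mathlib

/-- An ideal valuation on an integral domain `R`. -/
def IsIdealValuation (R : Type*) [CommRing R] (ν : Ideal R → ℕ∞) : Prop :=
  ν ⊥ = 0 ∧ ν ⊤ = ⊤ ∧
  (∀ I J : Ideal R, min (ν I) (ν J) ≤ ν (I * J)) ∧
  (∀ I : Ideal R, ν I = ⨆ (J : Ideal R) (_ : J ≤ I) (_ : J.FG), ν J)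

theorem idealValuation_extension
    (R T : Type*) [CommRing R] [IsDomain R] [CommRing T] [IsDomain T]
    (φ : R →+* T) (hφ : Function.Injective φ)
    (ν : Ideal R → ℕ∞) (hν : IsIdealValuation R ν) :
    IsIdealValuation T
      (fun I => ⨆ (J : Ideal R) (_ : J.FG) (_ : J.map φ ≤ I), ν J) := by
  obtain ⟨h0, htop, hmul, hsup⟩ := hν
  refine ⟨?_, ?_, ?_, ?_⟩
  · apply le_antisymm
    · refine iSup_le fun J => iSup_le fun hfg => iSup_le fun hle => ?_
      have hJ : J = ⊥ := by
        ext x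
        simp only [Ideal.mem_bot]
        constructor
        · intro hx
          have hx' := hle (Ideal.mem_map_of_mem φ hx)
          rw [Ideal.mem_bot] at hx'
          exact hφ (by simpa using hx')
        · rintro rfl; exact J.zero_mem
      rw [hJ, h0]
    · exact zero_le
  · rw [eq_top_iff]
    calc (⊤ : ℕ∞) = ν ⊤ := htop.symm
      _ ≤ _ := by
          apply le_iSup_of_le (⊤ : Ideal R)
          apply le_iSup_of_le (show (⊤ : Ideal R).FG from ⟨{1}, by simp⟩)
          exact le_iSup_of_le le_top le_rfl
  · intro I I'
    show _ ⊓ _ ≤ _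
    simp only [iSup_inf_eq, inf_iSup_eq]
    refine iSup_le fun J1 => iSup_le fun h1 => iSup_le fun hle1 =>
      iSup_le fun J2 => iSup_le fun h2 => iSup_le fun hle2 => ?_
    calc ν J2 ⊓ ν J1 ≤ ν (J2 * J1) := hmul J2 J1
      _ ≤ _ := by
          apply le_iSup_of_le (J2 * J1)
          apply le_iSup_of_le (Submodule.FG.mul h2 h1)
          have hP : Ideal.map φ (J2 * J1) ≤ I * I' := by
            rw [Ideal.map_mul]; exact Ideal.mul_mono hle2 hle1
          exact le_iSup (fun _ => ν (J2 * J1)) hP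
  · intro I
    apply le_antisymm
    · refine iSup_le fun J => iSup_le fun hfg => iSup_le fun hle => ?_
      refine le_iSup_of_le (J.map φ) (le_iSup_of_le hle (le_iSup_of_le (hfg.map φ) ?_))
      exact le_iSup_of_le J (le_iSup_of_le hfg (le_iSup_of_le le_rfl le_rfl))
    · refine iSup_le fun J' => iSup_le fun hle => iSup_le fun _ =>
        iSup_le fun J => iSup_le fun hfg => iSup_le fun hle2 => ?_
      exact le_iSup_of_le J (le_iSup_of_le hfg (le_iSup_of_le (hle2.trans hle) le_rfl))
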